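/- Let q and r be squarefree positive integers, let b be an integer coprime to r, and let d be a positive integer. Then the number of a ∈ {1, ..., q} with gcd(a,q) = 1 and denom(a/q + b/r) = d is at most d · gcd(q,r)/r. -/

import Mathlib

/-- Lemma 8.10: for squarefree `q, r` and `b` coprime to `r`, the number of
`a ∈ (ℤ/qℤ)^*` with `denom(a/q + b/r) = d` is at most `d·(q,r)/r`. Here the denominator of
a rational `x` (mod 1) is the least positive integer `D` with `D·x ∈ ℤ`, i.e. `Rat.den`. -/
theorem denom_lem (q r : ℕ) (hq : Squarefree q) (hr : Squarefree r)
    (b : ℤ) (hb : Int.gcd b (r : ℤ) = 1) (d : ℕ) (hd : 0 < d) :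
    ((Finset.filter
        (fun a => Nat.gcd a q = 1 ∧ ((a : ℚ) / (q : ℚ) + (b : ℚ) / (r : ℚ)).den = d)
        (Finset.Icc 1 q)).card : ℝ) ≤ (d : ℝ) * (Nat.gcd q r : ℝ) / (r : ℝ) := by
  have hq0 : 0 < q := Nat.pos_of_ne_zero hq.ne_zero
  have hr0 : 0 < r := Nat.pos_of_ne_zero hr.ne_zero
  set g := Nat.gcd q r with hg
  have hg0 : 0 < g := Nat.gcd_pos_of_pos_left _ hq0
  set q' := q / g with hq'def
  set r' := r / g with hr'def
  have hq' : g * q' = q := Nat.mul_div_cancel' (Nat.gcd_dvd_left q r)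
  have hr' : g * r' = r := Nat.mul_div_cancel' (Nat.gcd_dvd_right q r)
  have hq'0 : 0 < q' := by
    rcases Nat.eq_zero_or_pos q' with h | h
    · rw [h, Nat.mul_zero] at hq'; omega
    · exact h
  have hr'0 : 0 < r' := by
    rcases Nat.eq_zero_or_pos r' with h | h
    · rw [h, Nat.mul_zero] at hr'; omega
    · exact h
  have hcop : Nat.Coprime q' r' := Nat.coprime_div_gcd_div_gcd hg0
  set L := q * r' with hL
  have hL0 : 0 < L := Nat.mul_pos hq0 hr'0
  have hqr' : q' * r = q * r' := by rw [← hq', ← hr']; ring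
  -- the key representation: a/q + b/r = (a r' + b q') / L
  have hxeq : ∀ a : ℕ, ((a : ℚ) / (q : ℚ) + (b : ℚ) / (r : ℚ))
      = (((a : ℤ) * r' + b * q' : ℤ) : ℚ) / ((L : ℤ) : ℚ) := by
    intro a
    have hqQ : (q : ℚ) ≠ 0 := by positivity
    have hrQ : (r : ℚ) ≠ 0 := by positivity
    have hLQ : ((L : ℤ) : ℚ) ≠ 0 := by
      simp only [Int.cast_natCast]; positivity
    have h1 : ((q' : ℤ) : ℚ) * r = (q : ℚ) * r' := by exact_mod_cast hqr'
    field_simp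
    push_cast [hL]
    linear_combination (-(b : ℚ)) * (q : ℚ) * h1
  set S := Finset.filter
      (fun a => Nat.gcd a q = 1 ∧ ((a : ℚ) / (q : ℚ) + (b : ℚ) / (r : ℚ)).den = d)
      (Finset.Icc 1 q) with hS
  rcases S.eq_empty_or_nonempty with hSe | ⟨a₀, ha₀⟩
  · rw [hSe]
    simp only [Finset.card_empty, Nat.cast_zero]
    positivity
  -- from a₀ we get d ∣ L
  have hdL : d ∣ L := by
    have h := (Finset.mem_filter.mp ha₀).2.2
    rw [hxeq a₀] at h
    have hdvd : (((Rat.divInt ((a₀ : ℤ) * r' + b * q') (L : ℤ))).den : ℤ) ∣ (L : ℤ) :=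
      Rat.den_dvd _ _
    rw [Rat.divInt_eq_div, h] at hdvd
    exact_mod_cast hdvd
  set m := L / d with hm
  have hmd : m * d = L := Nat.div_mul_cancel hdL
  have hm0 : 0 < m := by
    rcases Nat.eq_zero_or_pos m with h | h
    · rw [h, Nat.zero_mul] at hmd; omega
    · exact h
  -- each member a of S satisfies m ∣ a r' + b q'
  have hkey : ∀ a ∈ S, ((m : ℤ)) ∣ ((a : ℤ) * r' + b * q') := by
    intro a ha
    obtain ⟨-, -, hden⟩ : a ∈ Finset.Icc 1 q ∧ Nat.gcd a q = 1 ∧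
        ((a : ℚ) / (q : ℚ) + (b : ℚ) / (r : ℚ)).den = d := by
      have h := Finset.mem_filter.mp ha
      exact ⟨h.1, h.2.1, h.2.2⟩
    set x := ((a : ℚ) / (q : ℚ) + (b : ℚ) / (r : ℚ)) with hx
    have hxL : (((a : ℤ) * r' + b * q' : ℤ) : ℚ) = x * (L : ℚ) := by
      rw [hx, hxeq a]
      have hLQ : ((L : ℤ) : ℚ) ≠ 0 := by
        simp only [Int.cast_natCast]; positivity
      push_cast at hLQ ⊢
      field_simp
    have hxnum : (x.num : ℚ) = x * (d : ℚ) := by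
      conv_rhs => rw [← Rat.num_div_den x, hden]
      have hdQ : (d : ℚ) ≠ 0 := by positivity
      field_simp
    have hN : (((a : ℤ) * r' + b * q' : ℤ) : ℚ) = ((x.num * m : ℤ) : ℚ) := by
      have hxL' : ((a : ℚ)) * r' + (b : ℚ) * q' = x * (L : ℚ) := by
        push_cast at hxL; exact hxL
      have hmdQ : ((m : ℚ)) * (d : ℚ) = (L : ℚ) := by exact_mod_cast hmd
      push_cast
      rw [hxnum]
      linear_combination hxL' - x * hmdQ
    have hNZ : ((a : ℤ) * r' + b * q') = x.num * m := by exact_mod_cast hN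
    exact ⟨x.num, by rw [hNZ]; ring⟩
  -- m is coprime to r'
  have hbr : Nat.Coprime b.natAbs r := by
    rwa [Int.gcd, Int.natAbs_natCast] at hb
  have hbr' : Nat.Coprime b.natAbs r' := hbr.coprime_dvd_right ⟨g, by rw [← hr']; ring⟩
  have hmr' : Nat.Coprime r' m := by
    set e := Nat.gcd r' m with he
    have her' : e ∣ r' := Nat.gcd_dvd_left _ _
    have hem : e ∣ m := Nat.gcd_dvd_right _ _
    have h1 : (e : ℤ) ∣ ((a₀ : ℤ) * r' + b * q') :=
      dvd_trans (Int.natCast_dvd_natCast.mpr hem) (hkey a₀ ha₀)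
    have h2 : (e : ℤ) ∣ (a₀ : ℤ) * r' :=
      Dvd.dvd.mul_left (Int.natCast_dvd_natCast.mpr her') _
    have h3 : (e : ℤ) ∣ b * q' := by
      have := dvd_sub h1 h2
      simpa using this
    have heb : Nat.Coprime e b.natAbs := (hbr'.coprime_dvd_right her').symm
    have h4 : (e : ℤ) ∣ (q' : ℤ) := by
      refine Int.dvd_of_dvd_mul_right_of_gcd_one h3 ?_
      simpa [Int.gcd, Int.natAbs_natCast] using heb
    have h5 : e ∣ q' := Int.natCast_dvd_natCast.mp h4
    have h6 : e ∣ 1 := hcop ▸ Nat.dvd_gcd h5 her'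
    exact Nat.dvd_one.mp h6
  have hmq : m ∣ q := by
    have hmL : m ∣ L := ⟨d, hmd.symm⟩
    rw [hL] at hmL
    exact (Nat.Coprime.dvd_of_dvd_mul_right (Nat.Coprime.symm hmr') hmL)
  -- all members of S are congruent mod m, hence S injects into range (q/m)
  have hcard : S.card ≤ q / m := by
    have : S.card ≤ (Finset.range (q / m)).card := by
      apply Finset.card_le_card_of_injOn (fun a => (a - 1) / m)
      · intro a ha
        have hmem := (Finset.mem_filter.mp ha).1
        rw [Finset.mem_Icc] at hmem
        rw [Finset.mem_coe, Finset.mem_range]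
        exact Nat.div_lt_div_of_lt_of_dvd hmq (by omega)
      · intro a ha a' ha' hfeq
        have hfeq' : (a - 1) / m = (a' - 1) / m := hfeq
        have hmem := (Finset.mem_filter.mp ha).1
        have hmem' := (Finset.mem_filter.mp ha').1
        rw [Finset.mem_Icc] at hmem hmem'
        have hd1 : ((m : ℤ)) ∣ ((a : ℤ) - a') * r' := by
          have h := dvd_sub (hkey a ha) (hkey a' ha')
          have h' : ((a : ℤ) * r' + b * q') - ((a' : ℤ) * r' + b * q')
              = ((a : ℤ) - a') * r' := by ring
          rwa [h'] at h
        have hd2 : ((m : ℤ)) ∣ ((a : ℤ) - a') := by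
          refine Int.dvd_of_dvd_mul_left_of_gcd_one hd1 ?_
          simpa [Int.gcd, Int.natAbs_natCast] using Nat.Coprime.symm hmr'
        have hmodeq : (a - 1) % m = (a' - 1) % m := by
          have hmm : (a - 1) ≡ (a' - 1) [MOD m] := by
            rw [Nat.modEq_iff_dvd]
            push_cast [Nat.cast_sub hmem.1, Nat.cast_sub hmem'.1]
            have h2 : ((a' : ℤ) - 1) - ((a : ℤ) - 1) = -(((a : ℤ) - a')) := by ring
            rw [h2]
            exact dvd_neg.mpr hd2
          exact hmm
        have heq : a - 1 = a' - 1 := by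
          rw [← Nat.div_add_mod (a - 1) m, ← Nat.div_add_mod (a' - 1) m, hfeq', hmodeq]
        omega
    simpa using this
  -- final arithmetic
  have hqm : (q : ℝ) / (m : ℝ) = (d : ℝ) * (g : ℝ) / (r : ℝ) := by
    have h1 : q * r = d * g * m := by
      calc q * r = g * (q * r') := by rw [← hr']; ring
        _ = g * (m * d) := by rw [hmd]
        _ = d * g * m := by ring
    have h1' : (q : ℝ) * r = (d : ℝ) * g * m := by exact_mod_cast h1
    rw [div_eq_div_iff (by positivity) (by positivity)]
    linarith
  calc (S.card : ℝ) ≤ ((q / m : ℕ) : ℝ) := by exact_mod_cast hcard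
    _ = (q : ℝ) / (m : ℝ) := by
        rw [Nat.cast_div hmq (by positivity)]
    _ = (d : ℝ) * (g : ℝ) / (r : ℝ) := hqm
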